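/- Let Ω ⊊ ℝ^m be a nonempty proper open subset, r(x) = dist(x, ℝ^m \ Ω), and f : Ω → ℝ a C² function. Fix α > 1, pairwise distinct real numbers δ_0, …, δ_m, and a strictly increasing sequence (γ_j)_{j≥0} with γ_0 = 0, γ_1 = 1, γ_j → ∞ and liminf_{j→∞} γ_j/γ_{j+1} > 0. Let (x_n) be a sequence in Ω with ∇f(x_n) ≠ 0 for all n, constructed by the New Q-Newton update: A_n = ∇²f(x_n) + δ_{j_n}‖∇f(x_n)‖^α · Id where j_n is the smallest index in {0,…,m} making A_n invertible (such an index exists); v_n = |A_n|⁻¹ ∇f(x_n); λ_n = 1/γ_{j+1} for the unique j with γ_j r(x_n)/2 ≤ ‖v_n‖ < γ_{j+1} r(x_n)/2; and x_{n+1} = x_n − λ_n v_n (which lies in Ω since λ_n‖v_n‖ < r(x_n)/2). If (x_n) converges to a point x_∞ ∈ Ω, then ∇f(x_∞) = 0. -/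

import Mathlib

open Gradient RealInnerProductSpace

/-- `AbsInvApply A g w` says that `w = |A|⁻¹ g`, where `|A|` is the unique symmetric
positive-definite square root `P` of `A²` (for `A` an invertible symmetric operator);
equivalently `|A|⁻¹ g = pr₊(A⁻¹g) − pr₋(A⁻¹g)` with `pr₊, pr₋` the orthogonal projections
onto the sums of positive, resp. negative, eigenspaces of `A`. -/
def AbsInvApply {E : Type*} [NormedAddCommGroup E] [InnerProductSpace ℝ E]
    (A : E →L[ℝ] E) (g w : E) : Prop :=
  ∃ P : E →L[ℝ] E, (∀ u u' : E, ⟪P u, u'⟫ = ⟪u, P u'⟫) ∧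
    (∀ u : E, u ≠ 0 → 0 < ⟪P u, u⟫) ∧ P.comp P = A.comp A ∧ P w = g

/-- The operator norm of a symmetric square root of `A²` is at most `‖A‖`. -/
theorem absSqrt_norm_le' {E : Type*} [NormedAddCommGroup E] [InnerProductSpace ℝ E]
    [CompleteSpace E]
    (P A : E →L[ℝ] E) (hsymm : ∀ u u' : E, ⟪P u, u'⟫ = ⟪u, P u'⟫)
    (hsq : P.comp P = A.comp A) : ‖P‖ ≤ ‖A‖ := by
  have hsa : IsSelfAdjoint P :=
    ContinuousLinearMap.isSelfAdjoint_iff_isSymmetric.mpr (fun u u' => hsymm u u')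
  have h1 : ‖P ∘L P‖ = ‖P‖ * ‖P‖ := by
    calc ‖P ∘L P‖ = ‖(ContinuousLinearMap.adjoint P) ∘L P‖ := by rw [hsa.adjoint_eq]
    _ = ‖P‖ * ‖P‖ := ContinuousLinearMap.norm_adjoint_comp_self P
  have h2 : ‖P ∘L P‖ ≤ ‖A‖ * ‖A‖ := by
    rw [show P ∘L P = A ∘L A from hsq]
    exact ContinuousLinearMap.opNorm_comp_le _ _
  nlinarith [norm_nonneg P, norm_nonneg A]

/-- A uniform positive lower bound for the ratios `γ k / γ (k+1)`, `k ≥ 1`. -/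
theorem gamma_ratio_lower_bound' (γ : ℕ → ℝ) (hγmono : StrictMono γ) (hγ0 : γ 0 = 0)
    (hγratio : 0 < Filter.liminf (fun j => γ j / γ (j + 1)) Filter.atTop) :
    ∃ ε > 0, ∀ k, 1 ≤ k → ε ≤ γ k / γ (k + 1) := by
  have hγpos : ∀ k, 1 ≤ k → 0 < γ k := fun k hk => by
    have := hγmono (show 0 < k from hk); linarith [hγ0 ▸ this]
  have hratpos : ∀ k, 1 ≤ k → 0 < γ k / γ (k + 1) := fun k hk =>
    div_pos (hγpos k hk) (hγpos (k + 1) (by omega))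
  have hbdd : Filter.IsBoundedUnder (· ≥ ·) Filter.atTop (fun j => γ j / γ (j + 1)) := by
    refine Filter.isBoundedUnder_of ⟨0, fun k => ?_⟩
    rcases Nat.eq_zero_or_pos k with h | h
    · simp [h, hγ0]
    · exact (hratpos k h).le
  set L := Filter.liminf (fun j => γ j / γ (j + 1)) Filter.atTop with hL
  have hev : ∀ᶠ k in Filter.atTop, L / 2 < γ k / γ (k + 1) :=
    Filter.eventually_lt_of_lt_liminf (by linarith) hbdd
  obtain ⟨N, hN⟩ := Filter.eventually_atTop.mp hev
  set N' := max N 1 with hN'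
  have hne : (Finset.Icc 1 N').Nonempty := ⟨1, by simp [hN']⟩
  refine ⟨min (L / 2) ((Finset.Icc 1 N').inf' hne (fun k => γ k / γ (k + 1))), ?_, ?_⟩
  · apply lt_min (by linarith)
    obtain ⟨k, hk, hkeq⟩ := (Finset.Icc 1 N').exists_mem_eq_inf' hne (fun k => γ k / γ (k + 1))
    rw [hkeq]
    exact hratpos k (Finset.mem_Icc.mp hk).1
  · intro k hk
    rcases le_or_gt k N' with h | h
    · exact le_trans (min_le_right _ _)
        (Finset.inf'_le _ (Finset.mem_Icc.mpr ⟨hk, h⟩))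
    · exact le_trans (min_le_left _ _) (hN k (le_trans (le_max_left _ _) h.le)).le

set_option maxHeartbeats 1000000 in
/-- Let `Ω ⊊ ℝ^m` be a nonempty proper open set, `r x = dist(x, Ωᶜ)`, and
`f` a `C²` function on `Ω`. For the Riemannian New Q-Newton iteration on `Ω` (with `α > 1`,
pairwise distinct `δ_0, …, δ_m`, and a scaling sequence `γ` as in the definition), if the
iterates `x n ∈ Ω` (all with `∇f(x n) ≠ 0`) converge to a point `xlim ∈ Ω`, then
`∇f(xlim) = 0`. -/
theorem riemannian_newQNewton_limit_is_critical
    {m : ℕ} (Ω : Set (EuclideanSpace ℝ (Fin m))) (hΩopen : IsOpen Ω)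
    (hΩne : Ω.Nonempty) (hΩproper : Ω ≠ Set.univ)
    (r : EuclideanSpace ℝ (Fin m) → ℝ) (hr : ∀ y, r y = Metric.infDist y Ωᶜ)
    (f : EuclideanSpace ℝ (Fin m) → ℝ) (hf : ContDiffOn ℝ 2 f Ω)
    (α : ℝ) (hα : 1 < α)
    (δs : Fin (m + 1) → ℝ) (hδs : Function.Injective δs)
    (γ : ℕ → ℝ) (hγmono : StrictMono γ) (hγ0 : γ 0 = 0) (hγ1 : γ 1 = 1)
    (hγtop : Filter.Tendsto γ Filter.atTop Filter.atTop)
    (hγratio : 0 < Filter.liminf (fun j => γ j / γ (j + 1)) Filter.atTop)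
    (x : ℕ → EuclideanSpace ℝ (Fin m)) (hmem : ∀ n, x n ∈ Ω)
    (hgrad0 : ∀ n, ∇ f (x n) ≠ 0)
    (A : ℕ → (EuclideanSpace ℝ (Fin m) →L[ℝ] EuclideanSpace ℝ (Fin m)))
    (j : ℕ → Fin (m + 1))
    (hA : ∀ n, A n = fderiv ℝ (fun y => ∇ f y) (x n) +
      (δs (j n) * ‖∇ f (x n)‖ ^ α) • ContinuousLinearMap.id ℝ (EuclideanSpace ℝ (Fin m)))
    (hAinv : ∀ n, IsUnit (A n))
    (hAmin : ∀ n, ∀ i : Fin (m + 1), i < j n →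
      ¬ IsUnit (fderiv ℝ (fun y => ∇ f y) (x n) +
        (δs i * ‖∇ f (x n)‖ ^ α) • ContinuousLinearMap.id ℝ (EuclideanSpace ℝ (Fin m))))
    (v : ℕ → EuclideanSpace ℝ (Fin m)) (hv : ∀ n, AbsInvApply (A n) (∇ f (x n)) (v n))
    (lam : ℕ → ℝ)
    (hlam : ∀ n, ∃ jj : ℕ, γ jj * r (x n) / 2 ≤ ‖v n‖ ∧ ‖v n‖ < γ (jj + 1) * r (x n) / 2 ∧
      lam n = 1 / γ (jj + 1))
    (hupd : ∀ n, x (n + 1) = x n - lam n • v n)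
    (xlim : EuclideanSpace ℝ (Fin m)) (hconv : Filter.Tendsto x Filter.atTop (nhds xlim))
    (hxlim : xlim ∈ Ω) :
    ∇ f xlim = 0 := by
  by_contra hg
  -- smoothness consequences
  have hfd : ContDiffOn ℝ 1 (fun y => fderiv ℝ f y) Ω :=
    hf.fderiv_of_isOpen hΩopen (by norm_num)
  have hgradC : ContDiffOn ℝ 1 (fun y => ∇ f y) Ω := by
    simpa [gradient, Function.comp_def] using
      (InnerProductSpace.toDual ℝ (EuclideanSpace ℝ (Fin m))).symm.contDiff.comp_contDiffOn hfd
  have hgct : ContinuousAt (fun y => ∇ f y) xlim :=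
    hgradC.continuousOn.continuousAt (hΩopen.mem_nhds hxlim)
  have hHct : ContinuousAt (fun y => fderiv ℝ (fun z => ∇ f z) y) xlim :=
    (hgradC.continuousOn_fderiv_of_isOpen hΩopen le_rfl).continuousAt (hΩopen.mem_nhds hxlim)
  have hgx : Filter.Tendsto (fun n => ∇ f (x n)) Filter.atTop (nhds (∇ f xlim)) :=
    hgct.tendsto.comp hconv
  have hHx : Filter.Tendsto (fun n => fderiv ℝ (fun z => ∇ f z) (x n)) Filter.atTop
      (nhds (fderiv ℝ (fun z => ∇ f z) xlim)) := hHct.tendsto.comp hconv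
  set G := ‖∇ f xlim‖ with hGdef
  have hG : 0 < G := norm_pos_iff.mpr hg
  have hGn : ∀ᶠ n in Filter.atTop, ‖∇ f (x n)‖ ∈ Set.Ioo (G / 2) (2 * G) :=
    hgx.norm.eventually_mem (Ioo_mem_nhds (by linarith) (by linarith))
  set K := ‖fderiv ℝ (fun z => ∇ f z) xlim‖ with hKdef
  have hKn : ∀ᶠ n in Filter.atTop, ‖fderiv ℝ (fun z => ∇ f z) (x n)‖ < K + 1 :=
    hHx.norm.eventually_lt_const (by linarith [norm_nonneg (fderiv ℝ (fun z => ∇ f z) xlim)])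
  obtain ⟨D, hD⟩ := Finite.exists_le (fun i : Fin (m + 1) => |δs i|)
  have hD0 : 0 ≤ D := le_trans (abs_nonneg _) (hD 0)
  set M := (K + 1) + D * (2 * G) ^ α with hMdef
  have hM : 0 < M := by
    have h1 : (0:ℝ) ≤ D * (2 * G) ^ α := by positivity
    have h2 : 0 ≤ K := norm_nonneg _
    linarith
  -- bound on ‖A n‖
  have hAn : ∀ᶠ n in Filter.atTop, ‖A n‖ ≤ M := by
    filter_upwards [hGn, hKn] with n h1 h2
    rw [hA n]
    have hsm : ‖(δs (j n) * ‖∇ f (x n)‖ ^ α) •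
        ContinuousLinearMap.id ℝ (EuclideanSpace ℝ (Fin m))‖ ≤ D * (2 * G) ^ α := by
      have hid : ‖ContinuousLinearMap.id ℝ (EuclideanSpace ℝ (Fin m))‖ ≤ 1 :=
        ContinuousLinearMap.norm_id_le
      have habs : |δs (j n) * ‖∇ f (x n)‖ ^ α| ≤ D * (2 * G) ^ α := by
        rw [abs_mul, abs_of_nonneg (Real.rpow_nonneg (norm_nonneg _) α)]
        exact mul_le_mul (hD (j n))
          (Real.rpow_le_rpow (norm_nonneg _) h1.2.le (by linarith))
          (Real.rpow_nonneg (norm_nonneg _) α) hD0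
      calc ‖(δs (j n) * ‖∇ f (x n)‖ ^ α) • ContinuousLinearMap.id ℝ (EuclideanSpace ℝ (Fin m))‖
          ≤ ‖(δs (j n) * ‖∇ f (x n)‖ ^ α : ℝ)‖ * ‖ContinuousLinearMap.id ℝ (EuclideanSpace ℝ (Fin m))‖ :=
            ContinuousLinearMap.opNorm_smul_le _ _
        _ ≤ |δs (j n) * ‖∇ f (x n)‖ ^ α| * 1 := by
            rw [Real.norm_eq_abs]
            exact mul_le_mul_of_nonneg_left hid (abs_nonneg _)
        _ ≤ D * (2 * G) ^ α := by rw [mul_one]; exact habs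
    calc ‖fderiv ℝ (fun y => ∇ f y) (x n) + (δs (j n) * ‖∇ f (x n)‖ ^ α) •
          ContinuousLinearMap.id ℝ (EuclideanSpace ℝ (Fin m))‖
        ≤ ‖fderiv ℝ (fun y => ∇ f y) (x n)‖ + ‖(δs (j n) * ‖∇ f (x n)‖ ^ α) •
          ContinuousLinearMap.id ℝ (EuclideanSpace ℝ (Fin m))‖ := norm_add_le _ _
      _ ≤ M := by rw [hMdef]; linarith
  -- lower bound on ‖v n‖
  have hvn : ∀ᶠ n in Filter.atTop, G / (2 * M) ≤ ‖v n‖ := by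
    filter_upwards [hGn, hAn] with n h1 h2
    obtain ⟨P, hsymm, hpos, hsq, hPv⟩ := hv n
    have hPA : ‖P‖ ≤ ‖A n‖ := absSqrt_norm_le' P (A n) hsymm hsq
    have hle : ‖∇ f (x n)‖ ≤ ‖P‖ * ‖v n‖ := by
      rw [← hPv]; exact P.le_opNorm (v n)
    have hvnn : 0 ≤ ‖v n‖ := norm_nonneg _
    have : G / 2 ≤ M * ‖v n‖ := by nlinarith [h1.1]
    rw [div_le_iff₀ (by positivity)]
    nlinarith
  -- distance to the boundary
  have hR : 0 < r xlim := by
    rw [hr]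
    exact (hΩopen.isClosed_compl.notMem_iff_infDist_pos
      (Set.nonempty_compl.mpr hΩproper)).mp (by simpa using hxlim)
  have hrx : Filter.Tendsto (fun n => r (x n)) Filter.atTop (nhds (r xlim)) := by
    have h := ((Metric.continuous_infDist_pt Ωᶜ).tendsto xlim).comp hconv
    have he : (fun n => r (x n)) = fun n => Metric.infDist (x n) Ωᶜ := by
      funext n; exact hr (x n)
    rw [he, hr]
    exact h
  have hrn : ∀ᶠ n in Filter.atTop, r xlim / 2 < r (x n) :=
    hrx.eventually_const_lt (by linarith)
  -- ratio lower bound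
  obtain ⟨ε, hεpos, hεle⟩ := gamma_ratio_lower_bound' γ hγmono hγ0 hγratio
  -- the step sizes tend to zero
  have hstep : Filter.Tendsto (fun n => x (n + 1) - x n) Filter.atTop (nhds 0) := by
    have h1 : Filter.Tendsto (fun n => x (n + 1)) Filter.atTop (nhds xlim) :=
      hconv.comp (Filter.tendsto_add_atTop_nat 1)
    simpa using h1.sub hconv
  set s := min (G / (2 * M)) (ε * r xlim / 4) with hsdef
  have hs : 0 < s := lt_min (by positivity) (by positivity)
  -- eventually the step is at least s
  have hbig : ∀ᶠ n in Filter.atTop, s ≤ ‖x (n + 1) - x n‖ := by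
    filter_upwards [hvn, hrn] with n hvb hrb
    obtain ⟨jj, h1, h2, h3⟩ := hlam n
    have hγ1le : (1:ℝ) ≤ γ (jj + 1) := by
      have := hγmono.monotone (show 1 ≤ jj + 1 by omega)
      rwa [hγ1] at this
    have hγp : 0 < γ (jj + 1) := by linarith
    have hlampos : 0 < lam n := by rw [h3]; positivity
    have heq : ‖x (n + 1) - x n‖ = lam n * ‖v n‖ := by
      rw [hupd n, sub_sub_cancel_left, norm_neg, norm_smul, Real.norm_eq_abs,
        abs_of_pos hlampos]
    rcases Nat.eq_zero_or_pos jj with h0 | h0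
    · have hl1 : lam n = 1 := by
        rw [h3, h0, zero_add, hγ1]; norm_num
      rw [heq, hl1, one_mul]
      exact le_trans (min_le_left _ _) hvb
    · have hεjj := hεle jj h0
      have hγjjpos : 0 < γ jj := by
        have := hγmono h0
        rwa [hγ0] at this
      rw [heq, h3]
      have hr4 : r xlim / 4 ≤ r (x n) / 2 := by linarith
      calc s ≤ ε * r xlim / 4 := min_le_right _ _
        _ = ε * (r xlim / 4) := by ring
        _ ≤ (γ jj / γ (jj + 1)) * (r (x n) / 2) :=
            mul_le_mul hεjj hr4 (by linarith) (by positivity)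
        _ = (1 / γ (jj + 1)) * (γ jj * r (x n) / 2) := by
            ring
        _ ≤ (1 / γ (jj + 1)) * ‖v n‖ :=
            mul_le_mul_of_nonneg_left h1 (by positivity)
  have hsmall : ∀ᶠ n in Filter.atTop, ‖x (n + 1) - x n‖ < s := by
    have h := hstep.norm
    rw [norm_zero] at h
    exact h.eventually_lt_const hs
  obtain ⟨n, hb, hsm⟩ := (hbig.and hsmall).exists
  linarith
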